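/- Let r > 0 and 0 < d ≤ 2r be real numbers, and let n = ⌊π / arcsin(d/(2r))⌋. Then there exists a set of n points on the circle {p ∈ ℝ² : ‖p‖ = r} such that the distance between any two distinct points of the set is at least d. -/

import Mathlib

open Real

private noncomputable def circlePt (r θ : ℝ) : EuclideanSpace ℝ (Fin 2) :=
  !₂[r * Real.cos θ, r * Real.sin θ]

private lemma circlePt_norm (r θ : ℝ) (hr : 0 ≤ r) : ‖circlePt r θ‖ = r := by
  rw [EuclideanSpace.norm_eq, Fin.sum_univ_two]
  simp only [circlePt, Matrix.cons_val_zero, Matrix.cons_val_one, Matrix.head_cons,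
    Real.norm_eq_abs, sq_abs]
  have h : (r * Real.cos θ) ^ 2 + (r * Real.sin θ) ^ 2 = r ^ 2 := by
    have := Real.sin_sq_add_cos_sq θ; nlinarith
  rw [h, Real.sqrt_sq hr]

private lemma circlePt_dist (r a b : ℝ) (hr : 0 ≤ r) :
    dist (circlePt r a) (circlePt r b) = 2 * r * |Real.sin ((a - b) / 2)| := by
  have hcos : Real.cos (a - b) = 1 - 2 * Real.sin ((a - b) / 2) ^ 2 := by
    have h1 := Real.cos_two_mul ((a - b) / 2)
    have h2 := Real.sin_sq_add_cos_sq ((a - b) / 2)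
    have h : 2 * ((a - b) / 2) = a - b := by ring
    rw [h] at h1
    nlinarith
  have key : (r * Real.cos a - r * Real.cos b) ^ 2 + (r * Real.sin a - r * Real.sin b) ^ 2
      = (2 * r * Real.sin ((a - b) / 2)) ^ 2 := by
    have hc := Real.cos_sub a b
    have h2 := Real.sin_sq_add_cos_sq a
    have h3 := Real.sin_sq_add_cos_sq b
    linear_combination (r^2) * h2 + (r^2) * h3 + 2*r^2*hc - 2*r^2*hcos
  rw [EuclideanSpace.dist_eq, Fin.sum_univ_two]
  simp only [circlePt, Matrix.cons_val_zero, Matrix.cons_val_one, Matrix.head_cons,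
    Real.dist_eq, sq_abs]
  rw [key, Real.sqrt_sq_eq_abs, abs_mul, abs_of_nonneg (by linarith : (0:ℝ) ≤ 2 * r)]

private lemma sin_mono_aux {u v : ℝ} (hu : 0 ≤ u) (huv : u ≤ v) (hv : v ≤ π - u) :
    Real.sin u ≤ Real.sin v := by
  rcases le_or_gt v (π / 2) with h | h
  · exact Real.sin_le_sin_of_le_of_le_pi_div_two (by linarith) h huv
  · rw [← Real.sin_pi_sub v]
    exact Real.sin_le_sin_of_le_of_le_pi_div_two (by linarith) (by linarith) (by linarith)

/-- For `0 < d ≤ 2r`, there is a set of `⌊π / arcsin (d / (2r))⌋` points on the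
circle of radius `r` centered at the origin of the Euclidean plane such that any
two distinct points of the set are at distance at least `d`. -/
theorem exists_points_on_circle_with_min_distance
    (r d : ℝ) (hr : 0 < r) (hd : 0 < d) (hdr : d ≤ 2 * r) :
    ∃ S : Finset (EuclideanSpace ℝ (Fin 2)),
      (S.card : ℤ) = ⌊π / arcsin (d / (2 * r))⌋ ∧
      (∀ p ∈ S, ‖p‖ = r) ∧
      ∀ p ∈ S, ∀ q ∈ S, p ≠ q → d ≤ dist p q := by
  classical
  have hr2 : (0:ℝ) < 2 * r := by linarith
  set α := arcsin (d / (2 * r)) with hα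
  have hd1 : d / (2 * r) ≤ 1 := by rw [div_le_one hr2]; exact hdr
  have hd0 : 0 < d / (2 * r) := div_pos hd hr2
  have hsin : Real.sin α = d / (2 * r) := Real.sin_arcsin (by linarith) hd1
  have hα0 : 0 < α := Real.arcsin_pos.2 hd0
  have hα2 : α ≤ π / 2 := Real.arcsin_le_pi_div_two _
  have hπα : (0:ℝ) ≤ π / α := le_of_lt (div_pos Real.pi_pos hα0)
  set n : ℕ := ⌊π / α⌋₊ with hn
  have hn2 : 2 ≤ n := by
    apply Nat.le_floor
    rw [le_div_iff₀ hα0]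
    push_cast
    linarith
  have hnpos : (0:ℝ) < n := by
    have : (2:ℝ) ≤ n := by exact_mod_cast hn2
    linarith
  have hαn : α ≤ π / n := by
    rw [le_div_iff₀ hnpos]
    have h1 : (n : ℝ) ≤ π / α := Nat.floor_le hπα
    calc α * n ≤ α * (π / α) := by nlinarith
      _ = π := by field_simp
  have hπn2 : π / n ≤ π / 2 := by
    apply div_le_div_of_nonneg_left Real.pi_pos.le (by norm_num)
    exact_mod_cast hn2
  set f : ℕ → EuclideanSpace ℝ (Fin 2) := fun k => circlePt r (2 * π * k / n) with hf
  have hdist : ∀ j k : ℕ, j < n → k < n → j ≠ k → d ≤ dist (f j) (f k) := by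
    have main : ∀ j k : ℕ, j < k → k < n → d ≤ dist (f j) (f k) := by
      intro j k hjk hkn
      rw [hf]
      simp only
      rw [circlePt_dist r _ _ hr.le]
      have hdiff : (2 * π * j / n - 2 * π * k / n) / 2 = -(π * ((k - j : ℕ) : ℝ) / n) := by
        have h : ((k - j : ℕ) : ℝ) = (k : ℝ) - j := by
          push_cast [Nat.cast_sub hjk.le]; ring
        rw [h]; field_simp; ring
      rw [hdiff, Real.sin_neg, abs_neg]
      set m : ℕ := k - j with hm
      have hm1 : 1 ≤ m := by omega
      have hmn : m < n := by omega
      have hm1' : (1:ℝ) ≤ m := by exact_mod_cast hm1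
      have hsle : Real.sin (π / n) ≤ Real.sin (π * m / n) := by
        apply sin_mono_aux (by positivity)
        · rw [div_le_div_iff₀ hnpos hnpos]
          nlinarith [mul_nonneg (mul_nonneg Real.pi_pos.le hnpos.le) (sub_nonneg.2 hm1')]
        · have hmn' : (m : ℝ) ≤ (n : ℝ) - 1 := by
            have : (m:ℝ) + 1 ≤ n := by exact_mod_cast hmn
            linarith
          have h1 : π * (m:ℝ) / n ≤ π * ((n:ℝ)-1) / n := by
            gcongr
          have h2 : π * ((n:ℝ)-1) / n = π - π / n := by field_simp
          linarith
      have hsα : Real.sin α ≤ Real.sin (π / n) :=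
        sin_mono_aux hα0.le hαn (by linarith)
      have habs : Real.sin (π * m / n) ≤ |Real.sin (π * m / n)| := le_abs_self _
      have hfin : d / (2 * r) ≤ |Real.sin (π * m / n)| := by
        rw [← hsin]; linarith
      calc d = 2 * r * (d / (2 * r)) := by field_simp
        _ ≤ 2 * r * |Real.sin (π * m / n)| := by nlinarith
    intro j k hj hk hjk
    rcases lt_or_gt_of_ne hjk with h | h
    · exact main j k h hk
    · rw [dist_comm]; exact main k j h hj
  refine ⟨(Finset.range n).image f, ?_, ?_, ?_⟩
  · have hinj : Set.InjOn f (Finset.range n) := by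
      intro j hj k hk hfe
      by_contra hne
      have := hdist j k (Finset.mem_range.1 hj) (Finset.mem_range.1 hk) hne
      rw [hfe, dist_self] at this
      linarith
    rw [Finset.card_image_of_injOn hinj, Finset.card_range]
    exact Int.natCast_floor_eq_floor hπα
  · intro p hp
    obtain ⟨k, _, rfl⟩ := Finset.mem_image.1 hp
    exact circlePt_norm r _ hr.le
  · intro p hp q hq hpq
    obtain ⟨j, hj, rfl⟩ := Finset.mem_image.1 hp
    obtain ⟨k, hk, rfl⟩ := Finset.mem_image.1 hq
    exact hdist j k (Finset.mem_range.1 hj) (Finset.mem_range.1 hk)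
      (fun h => hpq (by rw [h]))
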